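/- Let Ū ⊆ K̄ⁿ be a K̄-subspace of dimension d and let U ⊆ Kⁿ be a lift of Ū. A coordinate projection π : Kⁿ → K^d is an exhibition of Ū if and only if v(π(x)) = v(x) for all x ∈ U. In particular, if π is an exhibition of Ū, then the restriction of π to U is a K-linear isomorphism from U onto K^d. -/

import Mathlib

noncomputable section

open scoped Classical Pointwise

section Preamble

variable {K : Type*} [Field K] {Γ : Type*} [LinearOrderedCommGroupWithZero Γ]

instance (priority := 100) : OrderBot Γ where
  bot := 0
  bot_le _ := zero_le'

/-- The max-valuation on `K^n`: `v(a) = maxᵢ v(aᵢ)`. -/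
def vv (v : Valuation K Γ) {n : ℕ} (x : Fin n → K) : Γ :=
  Finset.univ.sup fun i => v (x i)

/-- `rvEq v x y` expresses `rv(x) = rv(y)` in `RV⁽ⁿ⁾ = Kⁿ/∼`, where
`x ∼ y` iff `v(x−y) < v(x)` or `x = y = 0`. -/
def rvEq (v : Valuation K Γ) {n : ℕ} (x y : Fin n → K) : Prop :=
  vv v (x - y) < vv v x ∨ (x = 0 ∧ y = 0)

/-- Balls in `K` (with `K` itself counting as a ball). -/
def IsBall1 (v : Valuation K Γ) (B : Set K) : Prop :=
  B = Set.univ ∨ ∃ a : K, ∃ γ : Γ, γ ≠ 0 ∧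
    (B = {x | v (x - a) < γ} ∨ B = {x | v (x - a) ≤ γ})

/-- Balls in `Kⁿ` (with `Kⁿ` itself counting as a ball). -/
def IsBall (v : Valuation K Γ) {n : ℕ} (B : Set (Fin n → K)) : Prop :=
  B = Set.univ ∨ ∃ a : Fin n → K, ∃ γ : Γ, γ ≠ 0 ∧
    (B = {x | vv v (x - a) < γ} ∨ B = {x | vv v (x - a) ≤ γ})

/-- Spherical completeness: every nonempty chain of balls in `K` has nonempty
intersection. -/
def SphericallyComplete (v : Valuation K Γ) : Prop :=
  ∀ C : Set (Set K), C.Nonempty → (∀ B ∈ C, IsBall1 v B) → IsChain (· ⊆ ·) C →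
    (⋂ B ∈ C, B).Nonempty

/-- The residue field `K̄` of the valuation ring `𝒪 = {x | v x ≤ 1}`. -/
def Kbar (v : Valuation K Γ) : Type _ :=
  IsLocalRing.ResidueField v.valuationSubring

instance (v : Valuation K Γ) : Field (Kbar v) :=
  inferInstanceAs (Field (IsLocalRing.ResidueField v.valuationSubring))

/-- The residue map `res : 𝒪 → K̄`, extended by the junk value `0` outside `𝒪`. -/
def res' (v : Valuation K Γ) (x : K) : Kbar v :=
  if h : v x ≤ 1 then IsLocalRing.residue v.valuationSubring ⟨x, h⟩ else 0

/-- The coordinatewise residue map on `Kⁿ`. -/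
def resv (v : Valuation K Γ) {n : ℕ} (x : Fin n → K) : Fin n → Kbar v :=
  fun i => res' v (x i)

/-- `res(S)` for a set `S ⊆ Kⁿ`: the set of residues of points of `S ∩ 𝒪ⁿ`. -/
def resSet (v : Valuation K Γ) {n : ℕ} (S : Set (Fin n → K)) : Set (Fin n → Kbar v) :=
  resv v '' {x ∈ S | ∀ i, v (x i) ≤ 1}

/-- `dir(x) = res(K·x) ⊆ K̄ⁿ`. -/
def dirSet (v : Valuation K Γ) {n : ℕ} (x : Fin n → K) : Set (Fin n → Kbar v) :=
  resSet v {y | ∃ c : K, y = c • x}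

/-- The coordinate projection `Kⁿ → K^d` selecting the coordinates `σ 0 < σ 1 < ⋯`. -/
def proj {A : Type*} {n d : ℕ} (σ : Fin d → Fin n) (x : Fin n → A) : Fin d → A :=
  fun k => x (σ k)

/-- `σ` (a strictly increasing selection of `d` of the `n` coordinates) is an
exhibition of the `K̄`-subspace `Ū ⊆ K̄ⁿ` if the corresponding coordinate projection
`K̄ⁿ → K̄^d` restricts to an isomorphism from `Ū` onto `K̄^d`. -/
def IsExhibition (v : Valuation K Γ) {n d : ℕ} (σ : Fin d → Fin n)
    (Ubar : Submodule (Kbar v) (Fin n → Kbar v)) : Prop :=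
  StrictMono σ ∧ Set.BijOn (proj σ) (Ubar : Set (Fin n → Kbar v)) Set.univ

/-- `affdir(C)`: the `K̄`-subspace of `K̄ⁿ` generated by all `dir(x − x')`, `x, x' ∈ C`. -/
def affdir (v : Valuation K Γ) {n : ℕ} (C : Set (Fin n → K)) :
    Submodule (Kbar v) (Fin n → Kbar v) :=
  Submodule.span (Kbar v) (⋃ x ∈ C, ⋃ x' ∈ C, dirSet v (x - x'))

/-- A matrix has entries in the valuation ring `𝒪`. -/
def EntriesInO (v : Valuation K Γ) {n : ℕ} (M : Matrix (Fin n) (Fin n) K) : Prop :=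
  ∀ i j, v (M i j) ≤ 1

/-- `M ∈ GLₙ(𝒪)`: `M` is invertible, with entries in `𝒪`, and its inverse also has
entries in `𝒪`. -/
def MemGLO (v : Valuation K Γ) {n : ℕ} (M : Matrix (Fin n) (Fin n) K) : Prop :=
  EntriesInO v M ∧ ∃ N : Matrix (Fin n) (Fin n) K,
    M * N = 1 ∧ N * M = 1 ∧ EntriesInO v N

/-- The entrywise residue matrix of `M`. -/
def resM (v : Valuation K Γ) {n : ℕ} (M : Matrix (Fin n) (Fin n) K) :
    Matrix (Fin n) (Fin n) (Kbar v) :=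
  fun i j => res' v (M i j)

/-- `DeltaLE v U W γ` expresses `Δ(U, W) ≤ γ`: for every `u ∈ U` there is `w ∈ W`
with `v(u − w) ≤ v(u)·γ`. -/
def DeltaLE (v : Valuation K Γ) {n : ℕ} (U W : Submodule K (Fin n → K)) (γ : Γ) : Prop :=
  ∀ u ∈ U, ∃ w ∈ W, vv v (u - w) ≤ vv v u * γ

/-- `IsDelta v U W γ` expresses `Δ(U, W) = γ`: `γ` is the minimum of all admissible
bounds. -/
def IsDelta (v : Valuation K Γ) {n : ℕ} (U W : Submodule K (Fin n → K)) (γ : Γ) : Prop :=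
  DeltaLE v U W γ ∧ ∀ δ : Γ, DeltaLE v U W δ → γ ≤ δ

end Preamble

variable {K : Type*} [Field K] {Γ : Type*} [LinearOrderedCommGroupWithZero Γ]

section Helpers

variable (v : Valuation K Γ)

lemma vv_le_iff {n : ℕ} {x : Fin n → K} {γ : Γ} : vv v x ≤ γ ↔ ∀ i, v (x i) ≤ γ := by
  simp [vv, Finset.sup_le_iff]

lemma vv_lt_one_iff {n : ℕ} {x : Fin n → K} : vv v x < 1 ↔ ∀ i, v (x i) < 1 := by
  rw [vv, Finset.sup_lt_iff (lt_of_le_of_lt bot_le (zero_lt_one : (0:Γ) < 1))]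
  simp

lemma le_vv {n : ℕ} (x : Fin n → K) (i : Fin n) : v (x i) ≤ vv v x :=
  Finset.le_sup (f := fun i => v (x i)) (Finset.mem_univ i)

lemma vv_eq_zero_iff {n : ℕ} {x : Fin n → K} : vv v x = 0 ↔ x = 0 := by
  constructor
  · intro h
    funext i
    have h1 := le_vv v x i
    rw [h] at h1
    have : v (x i) = 0 := le_antisymm h1 zero_le'
    simpa using v.zero_iff.mp this
  · rintro rfl
    refine le_antisymm (Finset.sup_le fun i _ => by simp) zero_le'

lemma vv_smul {n : ℕ} (c : K) (x : Fin n → K) : vv v (c • x) = v c * vv v x := by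
  have hmono : Monotone (fun g : Γ => v c * g) := fun _ _ h => mul_le_mul_right h (v c)
  have := Finset.comp_sup_eq_sup_comp (s := (Finset.univ : Finset (Fin n)))
    (f := fun i => v (x i)) (fun g : Γ => v c * g)
    (fun a b => hmono.map_sup a b) (by rw [show (⊥ : Γ) = 0 from le_antisymm bot_le zero_le', mul_zero])
  have hcoef : (fun i => v ((c • x) i)) = fun i => v c * v (x i) := by
    funext i
    simp [Pi.smul_apply, smul_eq_mul, map_mul]
  rw [vv, vv, hcoef]
  exact this.symm

lemma vv_proj_le {n d : ℕ} (σ : Fin d → Fin n) (x : Fin n → K) :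
    vv v (proj σ x) ≤ vv v x :=
  Finset.sup_le fun k _ => le_vv v x (σ k)

lemma res'_of_le {x : K} (h : v x ≤ 1) :
    res' v x = IsLocalRing.residue v.valuationSubring ⟨x, h⟩ := by
  rw [res']
  exact dif_pos h

lemma isUnit_val_iff {x : K} (h : v x ≤ 1) :
    IsUnit (⟨x, h⟩ : v.valuationSubring) ↔ v x = 1 := by
  constructor
  · rintro ⟨u, hu⟩
    have h1 : (u : v.valuationSubring) * (u⁻¹ : Units _) = 1 := u.mul_inv
    have h2 : v x * v ((u⁻¹ : Units _) : v.valuationSubring) = 1 := by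
      have := congrArg (fun z : v.valuationSubring => v (z : K)) h1
      simpa [hu, ← map_mul] using this
    have h3 : v ((u⁻¹ : Units _) : v.valuationSubring) ≤ 1 :=
      ((u⁻¹ : Units _) : v.valuationSubring).2
    refine le_antisymm h ?_
    calc (1 : Γ) = v x * v ((u⁻¹ : Units _) : v.valuationSubring) := h2.symm
      _ ≤ v x * 1 := mul_le_mul_right h3 _
      _ = v x := mul_one _
  · intro h1
    have hx0 : x ≠ 0 := by
      intro h0; rw [h0, map_zero] at h1; exact zero_ne_one h1
    have hinv : v x⁻¹ ≤ 1 := by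
      rw [map_inv₀, h1, inv_one]
    refine isUnit_iff_exists.mpr ⟨⟨x⁻¹, hinv⟩, ?_, ?_⟩
    · exact Subtype.ext (mul_inv_cancel₀ hx0)
    · exact Subtype.ext (inv_mul_cancel₀ hx0)

lemma res'_eq_zero_iff {x : K} (h : v x ≤ 1) : res' v x = 0 ↔ v x < 1 := by
  rw [res'_of_le v h]
  have h0 : IsLocalRing.residue v.valuationSubring ⟨x, h⟩ = 0 ↔
      (⟨x, h⟩ : v.valuationSubring) ∈ IsLocalRing.maximalIdeal v.valuationSubring :=
    Ideal.Quotient.eq_zero_iff_mem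
  refine h0.trans ?_
  rw [IsLocalRing.mem_maximalIdeal, mem_nonunits_iff, isUnit_val_iff v h]
  exact (h.lt_iff_ne).symm.trans (by simp)

lemma res'_zero : res' v 0 = 0 := by
  rw [res'_of_le v (by simp : v (0:K) ≤ 1)]
  exact map_zero _

lemma res'_add {x y : K} (hx : v x ≤ 1) (hy : v y ≤ 1) :
    res' v (x + y) = res' v x + res' v y := by
  have hxy : v (x + y) ≤ 1 := le_trans (v.map_add x y) (max_le hx hy)
  rw [res'_of_le v hxy, res'_of_le v hx, res'_of_le v hy,
    show (⟨x + y, hxy⟩ : v.valuationSubring) = ⟨x, hx⟩ + ⟨y, hy⟩ from rfl, map_add]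
  rfl

lemma res'_mul {x y : K} (hx : v x ≤ 1) (hy : v y ≤ 1) :
    res' v (x * y) = res' v x * res' v y := by
  have hxy : v (x * y) ≤ 1 := by
    rw [map_mul]
    calc v x * v y ≤ 1 * 1 := mul_le_mul' hx hy
      _ = 1 := one_mul _
  rw [res'_of_le v hxy, res'_of_le v hx, res'_of_le v hy,
    show (⟨x * y, hxy⟩ : v.valuationSubring) = ⟨x, hx⟩ * ⟨y, hy⟩ from rfl, map_mul]
  rfl

lemma resv_zero {n : ℕ} : resv v (0 : Fin n → K) = 0 := by
  funext i
  exact res'_zero v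

lemma resv_add {n : ℕ} {x y : Fin n → K} (hx : ∀ i, v (x i) ≤ 1) (hy : ∀ i, v (y i) ≤ 1) :
    resv v (x + y) = resv v x + resv v y := by
  funext i
  exact res'_add v (hx i) (hy i)

lemma resv_smul {n : ℕ} {c : K} {x : Fin n → K} (hc : v c ≤ 1) (hx : ∀ i, v (x i) ≤ 1) :
    resv v (c • x) = res' v c • resv v x := by
  funext i
  exact res'_mul v hc (hx i)

lemma resv_eq_zero_iff {n : ℕ} {x : Fin n → K} (hx : ∀ i, v (x i) ≤ 1) :
    resv v x = 0 ↔ ∀ i, v (x i) < 1 := by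
  rw [funext_iff]
  exact forall_congr' fun i => res'_eq_zero_iff v (hx i)

lemma resv_sum {n : ℕ} {ι : Type*} (s : Finset ι) (f : ι → Fin n → K)
    (hf : ∀ i ∈ s, ∀ j, v (f i j) ≤ 1) :
    resv v (∑ i ∈ s, f i) = ∑ i ∈ s, resv v (f i) := by
  classical
  induction s using Finset.induction with
  | empty => simpa using resv_zero v
  | @insert a s ha ih =>
    have hs : ∀ j, v ((∑ i ∈ s, f i) j) ≤ 1 := by
      intro j
      have : (∑ i ∈ s, f i) j = ∑ i ∈ s, f i j := by simp
      rw [this]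
      exact v.map_sum_le fun i hi => hf i (Finset.mem_insert_of_mem hi) j
    rw [Finset.sum_insert ha, Finset.sum_insert ha,
      resv_add v (hf a (Finset.mem_insert_self a s)) hs,
      ih fun i hi j => hf i (Finset.mem_insert_of_mem hi) j]

lemma resv_proj {n d : ℕ} (σ : Fin d → Fin n) (x : Fin n → K) :
    resv v (proj σ x) = proj σ (resv v x) := rfl

end Helpers

/-- a coordinate projection `π` is an exhibition of `Ū` iff
`v(π x) = v(x)` for all `x` in a lift `U` of `Ū`; in that case `π` restricts to a
`K`-linear isomorphism from `U` onto `K^d`. -/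
theorem exhibition_iff_valuation_preserving
    (v : Valuation K Γ) {n d : ℕ}
    (Ubar : Submodule (Kbar v) (Fin n → Kbar v))
    (hdim : Module.finrank (Kbar v) Ubar = d)
    (U : Submodule K (Fin n → K))
    (hlift : resSet v (U : Set (Fin n → K)) = (Ubar : Set (Fin n → Kbar v)))
    (σ : Fin d → Fin n) (hσ : StrictMono σ) :
    (IsExhibition v σ Ubar ↔ ∀ x ∈ U, vv v (proj σ x) = vv v x) ∧
    (IsExhibition v σ Ubar →
      Function.Bijective ((LinearMap.funLeft K K σ).domRestrict U)) := by
  classical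
  -- access to the lift
  have hmem : ∀ x ∈ U, (∀ i, v (x i) ≤ 1) → resv v x ∈ Ubar := by
    intro x hxU hxO
    rw [← SetLike.mem_coe, ← hlift]
    exact ⟨x, ⟨hxU, hxO⟩, rfl⟩
  have hlifted : ∀ u : Fin n → Kbar v, u ∈ Ubar →
      ∃ x, x ∈ U ∧ (∀ i, v (x i) ≤ 1) ∧ resv v x = u := by
    intro u hu
    rw [← SetLike.mem_coe, ← hlift] at hu
    obtain ⟨x, ⟨h1, h2⟩, h3⟩ := hu
    exact ⟨x, h1, h2, h3⟩
  -- normalization of a nonzero element of U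
  have hnorm : ∀ x ∈ U, x ≠ 0 → ∃ c : K, c ≠ 0 ∧ v c = vv v x ∧
      c⁻¹ • x ∈ U ∧ (∀ i, v ((c⁻¹ • x) i) ≤ 1) ∧ vv v (c⁻¹ • x) = 1 ∧
      resv v (c⁻¹ • x) ∈ Ubar ∧ resv v (c⁻¹ • x) ≠ 0 := by
    intro x hxU hx0
    have hn : Nonempty (Fin n) := by
      by_contra h
      exact hx0 (funext fun i => absurd ⟨i⟩ h)
    obtain ⟨i₀, -, hi₀⟩ :=
      Finset.exists_mem_eq_sup Finset.univ Finset.univ_nonempty (fun i => v (x i))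
    have hvx : vv v x ≠ 0 := fun h => hx0 ((vv_eq_zero_iff v).mp h)
    have hvc : v (x i₀) = vv v x := hi₀.symm
    have hc0 : x i₀ ≠ 0 := fun h => hvx (by rw [← hvc, h, map_zero])
    have hvc0 : v (x i₀) ≠ 0 := by rw [hvc]; exact hvx
    have h1 : vv v ((x i₀)⁻¹ • x) = 1 := by
      rw [vv_smul, map_inv₀, hvc, inv_mul_cancel₀ hvx]
    have hyO : ∀ i, v (((x i₀)⁻¹ • x) i) ≤ 1 := fun i => h1 ▸ le_vv v _ i
    refine ⟨x i₀, hc0, hvc, U.smul_mem _ hxU, hyO, h1,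
      hmem _ (U.smul_mem _ hxU) hyO, ?_⟩
    intro h
    have h2 := (resv_eq_zero_iff v hyO).mp h i₀
    have h3 : v (((x i₀)⁻¹ • x) i₀) = 1 := by
      show v ((x i₀)⁻¹ * x i₀) = 1
      rw [map_mul, map_inv₀]
      exact inv_mul_cancel₀ hvc0
    rw [h3] at h2
    exact lt_irrefl _ h2
  -- forward direction: exhibition → valuation preserving
  have fwd : IsExhibition v σ Ubar → ∀ x ∈ U, vv v (proj σ x) = vv v x := by
    rintro ⟨-, hbij⟩ x hxU
    refine le_antisymm (vv_proj_le v σ x) ?_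
    by_cases hx0 : x = 0
    · subst hx0
      have h0 : vv v (0 : Fin n → K) = 0 := (vv_eq_zero_iff v).mpr rfl
      rw [h0]
      exact zero_le'
    have hvx : vv v x ≠ 0 := fun h => hx0 ((vv_eq_zero_iff v).mp h)
    obtain ⟨c, hc0, hvc, hyU, hyO, hvy, hymem, hyne⟩ := hnorm x hxU hx0
    have hproj0 : proj σ (resv v (c⁻¹ • x)) ≠ 0 := by
      intro h
      apply hyne
      have h0m : (0 : Fin n → Kbar v) ∈ (Ubar : Set (Fin n → Kbar v)) := Ubar.zero_mem
      exact hbij.injOn hymem h0m (by rw [h]; rfl)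
    obtain ⟨k, hk⟩ : ∃ k, res' v ((c⁻¹ • x) (σ k)) ≠ 0 := by
      by_contra h
      push_neg at h
      exact hproj0 (funext h)
    have hk1 : v ((c⁻¹ • x) (σ k)) = 1 :=
      le_antisymm (hyO _)
        (not_lt.mp fun hlt => hk ((res'_eq_zero_iff v (hyO _)).mpr hlt))
    have h1le : (1 : Γ) ≤ vv v (proj σ (c⁻¹ • x)) := hk1 ▸ le_vv v (proj σ (c⁻¹ • x)) k
    have hps : proj σ (c⁻¹ • x) = c⁻¹ • proj σ x := rfl
    rw [hps, vv_smul, map_inv₀, hvc] at h1le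
    calc vv v x = vv v x * 1 := (mul_one _).symm
      _ ≤ vv v x * ((vv v x)⁻¹ * vv v (proj σ x)) := mul_le_mul_right h1le _
      _ = vv v (proj σ x) := by rw [← mul_assoc, mul_inv_cancel₀ hvx, one_mul]
  -- backward direction pieces
  have hInjOn : (∀ x ∈ U, vv v (proj σ x) = vv v x) →
      Set.InjOn (proj σ) (Ubar : Set (Fin n → Kbar v)) := by
    intro hval a ha b hb hab
    have hsub : a - b ∈ Ubar := Ubar.sub_mem ha hb
    obtain ⟨x, hxU, hxO, hxr⟩ := hlifted _ hsub
    have hlt : ∀ k, v (x (σ k)) < 1 := by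
      intro k
      have h0 : res' v (x (σ k)) = 0 := by
        have h1 : resv v x (σ k) = (a - b) (σ k) := by rw [hxr]
        have h2 : (a - b) (σ k) = 0 := by
          show a (σ k) - b (σ k) = 0
          have h3 : a (σ k) = proj σ a k := rfl
          have h4 : b (σ k) = proj σ b k := rfl
          rw [h3, h4, hab, sub_self]
        exact h1.trans h2
      exact (res'_eq_zero_iff v (hxO _)).mp h0
    have hlt1 : vv v (proj σ x) < 1 := (vv_lt_one_iff v).mpr hlt
    rw [hval x hxU] at hlt1
    have hx0 : resv v x = 0 :=
      (resv_eq_zero_iff v hxO).mpr ((vv_lt_one_iff v).mp hlt1)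
    rw [hxr] at hx0
    exact sub_eq_zero.mp hx0
  have hbwd : (∀ x ∈ U, vv v (proj σ x) = vv v x) → IsExhibition v σ Ubar := by
    intro hval
    have hinj := hInjOn hval
    refine ⟨hσ, fun a _ => Set.mem_univ _, hinj, ?_⟩
    set Fbar := (LinearMap.funLeft (Kbar v) (Kbar v) σ).domRestrict Ubar with hF
    have hFinj : Function.Injective Fbar := by
      intro a b h
      exact Subtype.ext (hinj a.2 b.2 h)
    haveI : FiniteDimensional (Kbar v) Ubar := FiniteDimensional.of_injective Fbar hFinj
    have hfr : Module.finrank (Kbar v) Ubar = Module.finrank (Kbar v) (Fin d → Kbar v) := by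
      rw [hdim, Module.finrank_fin_fun]
    have hFsurj : Function.Surjective Fbar :=
      (LinearMap.injective_iff_surjective_of_finrank_eq_finrank hfr).mp hFinj
    intro b _
    obtain ⟨z, hz⟩ := hFsurj b
    exact ⟨z.1, z.2, hz⟩
  refine ⟨⟨fwd, hbwd⟩, ?_⟩
  -- the "in particular" part
  intro hex
  have hval := fwd hex
  set F := (LinearMap.funLeft K K σ).domRestrict U with hFdef
  have hFinj : Function.Injective F := by
    refine LinearMap.ker_eq_bot.mp (LinearMap.ker_eq_bot'.mpr ?_)
    intro z hz
    have h0 : vv v (proj σ (z : Fin n → K)) = 0 := by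
      have h1 : proj σ (z : Fin n → K) = F z := rfl
      rw [h1, hz]
      exact (vv_eq_zero_iff v).mpr rfl
    rw [hval (z : Fin n → K) z.2] at h0
    exact Subtype.ext ((vv_eq_zero_iff v).mp h0)
  haveI : FiniteDimensional K U := FiniteDimensional.of_injective F hFinj
  have hle : Module.finrank K U ≤ d := by
    have h1 := LinearMap.finrank_le_finrank_of_injective hFinj
    rwa [Module.finrank_fin_fun] at h1
  -- Ubar has a basis of size d
  obtain ⟨-, hbij⟩ := hex
  set Gbar := (LinearMap.funLeft (Kbar v) (Kbar v) σ).domRestrict Ubar with hG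
  have hGinj : Function.Injective Gbar := fun a b h => Subtype.ext (hbij.injOn a.2 b.2 h)
  haveI : FiniteDimensional (Kbar v) Ubar := FiniteDimensional.of_injective Gbar hGinj
  let B := Module.finBasisOfFinrankEq (Kbar v) Ubar hdim
  choose x hx1 hx2 hx3 using fun i : Fin d => hlifted ((B i : Fin n → Kbar v)) (B i).2
  have hli : LinearIndependent K x := by
    rw [Fintype.linearIndependent_iff]
    intro g hg
    by_contra hne
    push_neg at hne
    obtain ⟨j, hj⟩ := hne
    haveI : Nonempty (Fin d) := ⟨j⟩
    obtain ⟨i₀, -, hi₀⟩ :=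
      Finset.exists_mem_eq_sup Finset.univ Finset.univ_nonempty (fun i => v (g i))
    have hm0 : v (g i₀) ≠ 0 := by
      intro h
      apply hj
      have hle' : v (g j) ≤ v (g i₀) := hi₀ ▸ Finset.le_sup (f := fun i => v (g i)) (Finset.mem_univ j)
      exact v.zero_iff.mp (le_antisymm (le_trans hle' (le_of_eq h)) zero_le')
    have hsum : ∑ i, ((g i₀)⁻¹ * g i) • x i = 0 := by
      have h1 : ∑ i, ((g i₀)⁻¹ * g i) • x i = (g i₀)⁻¹ • ∑ i, g i • x i := by
        rw [Finset.smul_sum]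
        refine Finset.sum_congr rfl fun i _ => ?_
        rw [smul_smul]
      rw [h1, hg, smul_zero]
    have hcoef : ∀ i, v ((g i₀)⁻¹ * g i) ≤ 1 := by
      intro i
      rw [map_mul, map_inv₀]
      have h2 : v (g i) ≤ v (g i₀) := hi₀ ▸ Finset.le_sup (f := fun i => v (g i)) (Finset.mem_univ i)
      calc (v (g i₀))⁻¹ * v (g i) ≤ (v (g i₀))⁻¹ * v (g i₀) := mul_le_mul_right h2 _
        _ = 1 := inv_mul_cancel₀ hm0
    have hterm : ∀ i ∈ Finset.univ, ∀ jj, v ((((g i₀)⁻¹ * g i) • x i) jj) ≤ 1 := by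
      intro i _ jj
      show v (((g i₀)⁻¹ * g i) * x i jj) ≤ 1
      rw [map_mul]
      calc v ((g i₀)⁻¹ * g i) * v (x i jj) ≤ 1 * 1 := mul_le_mul' (hcoef i) (hx2 i jj)
        _ = 1 := one_mul _
    have h1 : resv v (∑ i, ((g i₀)⁻¹ * g i) • x i)
        = ∑ i, resv v (((g i₀)⁻¹ * g i) • x i) :=
      resv_sum v _ _ hterm
    rw [hsum, resv_zero v] at h1
    have h2 : ∀ i : Fin d, resv v (((g i₀)⁻¹ * g i) • x i)
        = res' v ((g i₀)⁻¹ * g i) • ((B i : Fin n → Kbar v)) := by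
      intro i
      rw [resv_smul v (hcoef i) (hx2 i), hx3 i]
    rw [Finset.sum_congr rfl fun i _ => h2 i] at h1
    have hzero : ∑ i, res' v ((g i₀)⁻¹ * g i) • B i = (0 : Ubar) := by
      apply Subtype.ext
      have hcoe : ((∑ i, res' v ((g i₀)⁻¹ * g i) • B i : Ubar) : Fin n → Kbar v)
          = ∑ i, res' v ((g i₀)⁻¹ * g i) • ((B i : Fin n → Kbar v)) := by
        simp
      rw [hcoe, ← h1]
      rfl
    have hcoef0 := Fintype.linearIndependent_iff.mp B.linearIndependent _ hzero i₀
    have hval1 : v ((g i₀)⁻¹ * g i₀) = 1 := by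
      rw [map_mul, map_inv₀]
      exact inv_mul_cancel₀ hm0
    have := (res'_eq_zero_iff v (hcoef i₀)).mp hcoef0
    rw [hval1] at this
    exact lt_irrefl _ this
  have hge : d ≤ Module.finrank K U := by
    have h1 : Submodule.span K (Set.range x) ≤ U :=
      Submodule.span_le.mpr (Set.range_subset_iff.mpr hx1)
    have h2 : Module.finrank K (Submodule.span K (Set.range x)) = d := by
      rw [finrank_span_eq_card hli, Fintype.card_fin]
    calc d = Module.finrank K (Submodule.span K (Set.range x)) := h2.symm
      _ ≤ Module.finrank K U := Submodule.finrank_mono h1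
  have hUd : Module.finrank K U = Module.finrank K (Fin d → K) := by
    rw [Module.finrank_fin_fun]
    exact le_antisymm hle hge
  exact ⟨hFinj, (LinearMap.injective_iff_surjective_of_finrank_eq_finrank hUd).mp hFinj⟩

end
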